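/- Let P = ({E_k : k ∈ K}, {M_0, M_1}) be a concurrent quantum program on ℂ^d with input a partial density operator ρ_0, and let F = ∑_{k∈K} F_k. For each n ≥ 0 set Y_n = supp(∑_{i=0}^{n} F^i(ρ_0)). Then the increasing chain Y_0 ⊆ Y_1 ⊆ ⋯ stabilizes by step d−1: Y_n = Y_{d−1} for all n ≥ d−1. -/

import Mathlib

open Matrix
open scoped ComplexOrder

/-- The support of a matrix `ρ`, i.e. the range (column space) of `ρ`. -/
noncomputable def matSupp {d : ℕ} (ρ : Matrix (Fin d) (Fin d) ℂ) :
    Submodule ℂ (Fin d → ℂ) :=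
  LinearMap.range ρ.mulVecLin

/-- The super-operator `F_k(ρ) = E_k(M₁ ρ M₁ᴴ)` of process `k`, where the
super-operator `E_k` has Kraus operators `E k i`. -/
noncomputable def progF {d m n : ℕ} (E : Fin m → Fin n → Matrix (Fin d) (Fin d) ℂ)
    (M₁ : Matrix (Fin d) (Fin d) ℂ) (k : Fin m)
    (ρ : Matrix (Fin d) (Fin d) ℂ) : Matrix (Fin d) (Fin d) ℂ :=
  ∑ i, E k i * (M₁ * ρ * M₁ᴴ) * (E k i)ᴴ

/-- For a finite string `f = s₁s₂⋯sₙ`, the super-operator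
`F_f = F_{sₙ} ∘ ⋯ ∘ F_{s₂} ∘ F_{s₁}` (the identity for the empty string). -/
noncomputable def progFStr {d m n : ℕ} (E : Fin m → Fin n → Matrix (Fin d) (Fin d) ℂ)
    (M₁ : Matrix (Fin d) (Fin d) ℂ) :
    List (Fin m) → Matrix (Fin d) (Fin d) ℂ → Matrix (Fin d) (Fin d) ℂ
  | [], ρ => ρ
  | k :: f, ρ => progFStr E M₁ f (progF E M₁ k ρ)

/- ### Auxiliary lemmas -/

lemma range_ct_mul_self {l : Type*} [Fintype l] {d : ℕ} (M : Matrix l (Fin d) ℂ) :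
    LinearMap.range (Mᴴ * M).mulVecLin = LinearMap.range Mᴴ.mulVecLin := by
  have hle : LinearMap.range (Mᴴ * M).mulVecLin ≤ LinearMap.range Mᴴ.mulVecLin := by
    rw [Matrix.mulVecLin_mul]
    exact LinearMap.range_comp_le_range _ _
  refine (Submodule.eq_of_le_of_finrank_le hle ?_)
  have h1 : (Mᴴ * M).rank = Mᴴ.rank := by
    rw [Matrix.rank_conjTranspose_mul_self, Matrix.rank_conjTranspose]
  simpa [Matrix.rank] using h1.ge

lemma matSupp_conj {d : ℕ} (A : Matrix (Fin d) (Fin d) ℂ) {ρ : Matrix (Fin d) (Fin d) ℂ}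
    (hρ : ρ.PosSemidef) :
    matSupp (A * ρ * Aᴴ) = Submodule.map A.mulVecLin (matSupp ρ) := by
  obtain ⟨B, hB⟩ : ∃ B : Matrix (Fin d) (Fin d) ℂ, ρ = Bᴴ * B := by
    obtain ⟨X, hX, -, hXe⟩ := open scoped MatrixOrder in CFC.exists_sqrt_of_isSelfAdjoint_of_quasispectrumRestricts
      (sub_zero ρ ▸ hρ.isHermitian) (QuasispectrumRestricts.nnreal_of_nonneg hρ.nonneg)
    exact ⟨X, by rw [← hXe, ← Matrix.star_eq_conjTranspose, hX.star_eq]⟩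
  have hr : matSupp ρ = LinearMap.range Bᴴ.mulVecLin := by
    rw [matSupp, hB, range_ct_mul_self]
  have h1 : A * ρ * Aᴴ = (B * Aᴴ)ᴴ * (B * Aᴴ) := by
    rw [hB]; simp [Matrix.conjTranspose_mul, Matrix.mul_assoc]
  rw [matSupp, h1, range_ct_mul_self, hr]
  rw [Matrix.conjTranspose_mul, Matrix.conjTranspose_conjTranspose, Matrix.mulVecLin_mul,
    LinearMap.range_comp]

lemma le_matSupp_add {d : ℕ} {ρ σ : Matrix (Fin d) (Fin d) ℂ}
    (hρ : ρ.PosSemidef) (hσ : σ.PosSemidef) :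
    matSupp ρ ≤ matSupp (ρ + σ) := by
  obtain ⟨R, hR⟩ : ∃ R : Matrix (Fin d) (Fin d) ℂ, ρ = Rᴴ * R := by
    obtain ⟨X, hX, -, hXe⟩ := open scoped MatrixOrder in CFC.exists_sqrt_of_isSelfAdjoint_of_quasispectrumRestricts
      (sub_zero ρ ▸ hρ.isHermitian) (QuasispectrumRestricts.nnreal_of_nonneg hρ.nonneg)
    exact ⟨X, by rw [← hXe, ← Matrix.star_eq_conjTranspose, hX.star_eq]⟩
  obtain ⟨S, hS⟩ : ∃ S : Matrix (Fin d) (Fin d) ℂ, σ = Sᴴ * S := by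
    obtain ⟨X, hX, -, hXe⟩ := open scoped MatrixOrder in CFC.exists_sqrt_of_isSelfAdjoint_of_quasispectrumRestricts
      (sub_zero σ ▸ hσ.isHermitian) (QuasispectrumRestricts.nnreal_of_nonneg hσ.nonneg)
    exact ⟨X, by rw [← hXe, ← Matrix.star_eq_conjTranspose, hX.star_eq]⟩
  have hsum : ρ + σ = (Matrix.fromRows R S)ᴴ * (Matrix.fromRows R S) := by
    rw [Matrix.conjTranspose_fromRows_eq_fromCols_conjTranspose,
      Matrix.fromCols_mul_fromRows, hR, hS]
  have h2 : matSupp (ρ + σ) = LinearMap.range (Matrix.fromRows R S)ᴴ.mulVecLin := by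
    rw [matSupp, hsum, range_ct_mul_self]
  have h3 : matSupp ρ = LinearMap.range Rᴴ.mulVecLin := by
    rw [matSupp, hR, range_ct_mul_self]
  rw [h2, h3, Matrix.conjTranspose_fromRows_eq_fromCols_conjTranspose]
  rintro x ⟨y, rfl⟩
  refine ⟨Sum.elim y 0, ?_⟩
  simp [Matrix.mulVecLin_apply]

lemma matSupp_add {d : ℕ} {ρ σ : Matrix (Fin d) (Fin d) ℂ}
    (hρ : ρ.PosSemidef) (hσ : σ.PosSemidef) :
    matSupp (ρ + σ) = matSupp ρ ⊔ matSupp σ := by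
  refine le_antisymm ?_ (sup_le (le_matSupp_add hρ hσ)
    (by simpa [add_comm] using le_matSupp_add hσ hρ))
  rintro x ⟨y, rfl⟩
  have : (ρ + σ).mulVecLin y = ρ.mulVecLin y + σ.mulVecLin y := by
    simp [Matrix.mulVecLin_apply, Matrix.add_mulVec]
  rw [this]
  exact Submodule.add_mem_sup ⟨y, rfl⟩ ⟨y, rfl⟩

lemma psd_sum {d : ℕ} {ι : Type*} {s : Finset ι} {g : ι → Matrix (Fin d) (Fin d) ℂ}
    (hg : ∀ j ∈ s, (g j).PosSemidef) : (∑ j ∈ s, g j).PosSemidef := by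
  classical
  induction s using Finset.cons_induction with
  | empty => simpa using Matrix.PosSemidef.zero
  | cons a s ha ih =>
      rw [Finset.sum_cons]
      exact (hg a (Finset.mem_cons_self a s)).add
        (ih fun j hj => hg j (Finset.mem_cons_of_mem hj))

lemma matSupp_zero {d : ℕ} : matSupp (0 : Matrix (Fin d) (Fin d) ℂ) = ⊥ := by
  simp [matSupp]

lemma matSupp_conj_sum {d : ℕ} {ι : Type*} {s : Finset ι} (B : ι → Matrix (Fin d) (Fin d) ℂ)
    {ρ : Matrix (Fin d) (Fin d) ℂ} (hρ : ρ.PosSemidef) :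
    matSupp (∑ j ∈ s, B j * ρ * (B j)ᴴ)
      = s.sup (fun j => Submodule.map (B j).mulVecLin (matSupp ρ)) := by
  classical
  induction s using Finset.cons_induction with
  | empty => simpa using matSupp_zero
  | cons a s ha ih =>
      rw [Finset.sum_cons, Finset.sup_cons,
        matSupp_add (hρ.mul_mul_conjTranspose_same _)
          (psd_sum fun j _ => hρ.mul_mul_conjTranspose_same _),
        ih, matSupp_conj _ hρ]

theorem supp_chain_stabilizes {d m n : ℕ}
    (E : Fin m → Fin n → Matrix (Fin d) (Fin d) ℂ)
    (M₀ M₁ : Matrix (Fin d) (Fin d) ℂ)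
    (hE : ∀ k, ∑ i, (E k i)ᴴ * E k i = 1)
    (hM : M₀ᴴ * M₀ + M₁ᴴ * M₁ = 1)
    (ρ₀ : Matrix (Fin d) (Fin d) ℂ) (hρ₀ : ρ₀.PosSemidef) (htr : ρ₀.trace ≤ 1) :
    ∀ N : ℕ, d - 1 ≤ N →
      matSupp (∑ i ∈ Finset.range (N + 1), (fun ρ => ∑ k, progF E M₁ k ρ)^[i] ρ₀)
        = matSupp (∑ i ∈ Finset.range (d - 1 + 1), (fun ρ => ∑ k, progF E M₁ k ρ)^[i] ρ₀) := by
  classical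
  set F : Matrix (Fin d) (Fin d) ℂ → Matrix (Fin d) (Fin d) ℂ :=
    fun ρ => ∑ k, progF E M₁ k ρ with hFdef
  set T : ℕ → Matrix (Fin d) (Fin d) ℂ :=
    fun N => ∑ i ∈ Finset.range (N + 1), F^[i] ρ₀ with hTdef
  -- basic properties of F
  have hFrw : ∀ ρ : Matrix (Fin d) (Fin d) ℂ,
      F ρ = ∑ p : Fin m × Fin n, (E p.1 p.2 * M₁) * ρ * (E p.1 p.2 * M₁)ᴴ := by
    intro ρ
    rw [hFdef, Fintype.sum_prod_type]
    refine Finset.sum_congr rfl fun k _ => ?_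
    refine Finset.sum_congr rfl fun i _ => ?_
    simp [Matrix.conjTranspose_mul, Matrix.mul_assoc]
  have hFpsd : ∀ ρ : Matrix (Fin d) (Fin d) ℂ, ρ.PosSemidef → (F ρ).PosSemidef := by
    intro ρ hρ
    rw [hFrw]
    exact psd_sum fun p _ => hρ.mul_mul_conjTranspose_same _
  have hF0 : F 0 = 0 := by simp [hFdef, progF]
  have hFadd : ∀ ρ σ : Matrix (Fin d) (Fin d) ℂ, F (ρ + σ) = F ρ + F σ := by
    intro ρ σ
    simp [hFdef, progF, Matrix.mul_add, Matrix.add_mul, Finset.sum_add_distrib]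
  have hFsum : ∀ (s : Finset ℕ) (g : ℕ → Matrix (Fin d) (Fin d) ℂ),
      F (∑ i ∈ s, g i) = ∑ i ∈ s, F (g i) := by
    intro s g
    induction s using Finset.cons_induction with
    | empty => simpa using hF0
    | cons a s ha ih => rw [Finset.sum_cons, Finset.sum_cons, hFadd, ih]
  have hiter : ∀ i : ℕ, (F^[i] ρ₀).PosSemidef := by
    intro i
    induction i with
    | zero => simpa using hρ₀
    | succ i ih => rw [Function.iterate_succ_apply']; exact hFpsd _ ih
  have hTpsd : ∀ N, (T N).PosSemidef := fun N => psd_sum fun i _ => hiter i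
  have hTrec : ∀ N, T (N + 1) = ρ₀ + F (T N) := by
    intro N
    rw [hTdef]
    simp only []
    rw [Finset.sum_range_succ']
    simp only [Function.iterate_succ_apply', Function.iterate_zero_apply]
    rw [← hFsum, add_comm]
  -- the support map
  set G : Submodule ℂ (Fin d → ℂ) → Submodule ℂ (Fin d → ℂ) :=
    fun X => Finset.univ.sup
      (fun p : Fin m × Fin n => Submodule.map (E p.1 p.2 * M₁).mulVecLin X) with hGdef
  have hGmono : ∀ X Y : Submodule ℂ (Fin d → ℂ), X ≤ Y → G X ≤ G Y := by
    intro X Y hXY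
    exact Finset.sup_mono_fun fun p _ => Submodule.map_mono hXY
  have hFsupp : ∀ ρ : Matrix (Fin d) (Fin d) ℂ, ρ.PosSemidef →
      matSupp (F ρ) = G (matSupp ρ) := by
    intro ρ hρ
    rw [hFrw, matSupp_conj_sum _ hρ]
  set Y : ℕ → Submodule ℂ (Fin d → ℂ) := fun N => matSupp (T N) with hYdef
  have hYrec : ∀ N, Y (N + 1) = Y 0 ⊔ G (Y N) := by
    intro N
    rw [hYdef]
    simp only []
    rw [hTrec, matSupp_add hρ₀ (hFpsd _ (hTpsd N)), hFsupp _ (hTpsd N)]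
    congr 1
    rw [hTdef]
    simp
  have hYmono : ∀ N, Y N ≤ Y (N + 1) := by
    intro N
    induction N with
    | zero => rw [hYrec]; exact le_sup_left
    | succ N ih =>
        rw [hYrec N, hYrec (N + 1)]
        exact sup_le_sup_left (hGmono _ _ ih) _
  have hprop : ∀ a, Y a = Y (a + 1) → ∀ k, Y (a + k) = Y a := by
    intro a ha k
    induction k with
    | zero => rfl
    | succ k ih =>
        have : a + (k + 1) = (a + k) + 1 := by omega
        rw [this, hYrec, ih, ← hYrec, ← ha]
  -- key step
  have hkey : Y (d - 1) = Y (d - 1 + 1) := by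
    by_cases hz : ρ₀ = 0
    · have hT0 : ∀ N, T N = 0 := by
        intro N
        rw [hTdef]
        exact Finset.sum_eq_zero fun i _ => by rw [hz, Function.iterate_fixed hF0 i]
      rw [hYdef]; simp only []; rw [hT0, hT0]
    · have hd : 0 < d := by
        rcases Nat.eq_zero_or_pos d with h | h
        · exfalso; apply hz; subst h; ext i j; exact i.elim0
        · exact h
      by_contra hne
      have hneq : ∀ j, j ≤ d - 1 → Y j ≠ Y (j + 1) := by
        intro j hj h
        apply hne
        have h1 := hprop j h (d - 1 - j)
        have h2 := hprop j h (d - 1 + 1 - j)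
        have e1 : j + (d - 1 - j) = d - 1 := by omega
        have e2 : j + (d - 1 + 1 - j) = d - 1 + 1 := by omega
        rw [e1] at h1; rw [e2] at h2
        rw [h1, h2]
      have hstrict : ∀ j, j ≤ d - 1 → Y j < Y (j + 1) :=
        fun j hj => lt_of_le_of_ne (hYmono j) (hneq j hj)
      have hrank : ∀ j, j ≤ d →
          Module.finrank ℂ (Y 0) + j ≤ Module.finrank ℂ (Y j) := by
        intro j
        induction j with
        | zero => intro _; simp
        | succ j ih =>
            intro hj
            have h1 := ih (by omega)
            have h2 : Module.finrank ℂ (Y j) < Module.finrank ℂ (Y (j + 1)) :=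
              Submodule.finrank_lt_finrank_of_lt (hstrict j (by omega))
            omega
      have hY0 : Y 0 ≠ ⊥ := by
        intro hbot
        apply hz
        have hT0 : T 0 = ρ₀ := by rw [hTdef]; simp
        rw [hYdef] at hbot; simp only [] at hbot
        rw [hT0] at hbot
        have hm0 : ρ₀.mulVecLin = 0 := LinearMap.range_eq_bot.mp hbot
        ext i j
        have := congrFun (LinearMap.ext_iff.mp hm0 (Pi.single j 1)) i
        simpa [Matrix.mulVecLin_apply, Matrix.mulVec_single] using this
      have h1 : 1 ≤ Module.finrank ℂ (Y 0) := by
        rw [Nat.one_le_iff_ne_zero]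
        intro h
        exact hY0 (Submodule.finrank_eq_zero.mp h)
      have h2 := hrank d le_rfl
      have h3 : Module.finrank ℂ (Y d) ≤ d := by
        have := Submodule.finrank_le (Y d)
        simpa [Module.finrank_fin_fun] using this
      omega
  intro N hN
  have := hprop (d - 1) hkey (N - (d - 1))
  have e : d - 1 + (N - (d - 1)) = N := by omega
  rw [e] at this
  exact this
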